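/- Let f : [γ_1, γ_2] → ℝ be C^{m_0} with max_{0 ≤ n ≤ m_0} |∂_γ^n f(γ)| ≥ ρ for all γ ∈ [γ_1, γ_2] (uniform transversality). Then for every δ > 0 the measure of the sublevel set { γ ∈ [γ_1, γ_2] : |f(γ)| < δ } is bounded by C(m_0, ρ, f) δ^{1/m_0}, for a constant depending on m_0, ρ and the C^{m_0+1}-norm of f (Rüssmann's lemma). -/

import Mathlib

open Set MeasureTheory

private lemma russmann_lemA : ∀ (n : ℕ) (f : ℝ → ℝ) (a b c : ℝ), 0 < c → ContDiff ℝ n f →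
    (∀ k < n, iteratedDeriv k f a = 0) →
    (∀ x ∈ Set.Icc a b, c ≤ iteratedDeriv n f x) →
    ∀ x ∈ Set.Icc a b, c * (x - a) ^ n / (n.factorial : ℝ) ≤ f x := by
  intro n
  induction n with
  | zero =>
    intro f a b c hc _ _ hbd x hx
    simpa using hbd x hx
  | succ n IH =>
    intro f a b c hc hf hz hbd x hx
    have hf' : ContDiff ℝ ((n : WithTop ℕ∞) + 1) f := by exact_mod_cast hf
    obtain ⟨hfd, -, hfderiv⟩ := contDiff_succ_iff_deriv.mp hf'
    have hfderiv' : ContDiff ℝ (n : ℕ) (deriv f) := by exact_mod_cast hfderiv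
    have IH' : ∀ y ∈ Set.Icc a b, c * (y - a) ^ n / (n.factorial : ℝ) ≤ deriv f y := by
      refine IH (deriv f) a b c hc hfderiv' (fun k hk => ?_) (fun y hy => ?_)
      · rw [← iteratedDeriv_succ']; exact hz (k + 1) (by omega)
      · rw [← iteratedDeriv_succ']; exact hbd y hy
    set p : ℝ → ℝ := fun y => c / ((n + 1).factorial : ℝ) * (y - a) ^ (n + 1) with hp_def
    have hfac : ((n + 1).factorial : ℝ) = (n + 1) * (n.factorial : ℝ) := by
      exact_mod_cast Nat.factorial_succ n
    have hp : ∀ y : ℝ, HasDerivAt p (c * (y - a) ^ n / (n.factorial : ℝ)) y := by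
      intro y
      have h1 : HasDerivAt (fun y : ℝ => (y - a) ^ (n + 1)) ((n + 1) * (y - a) ^ n) y := by
        simpa using ((hasDerivAt_id y).sub_const a).fun_pow (n + 1)
      have h2 := h1.const_mul (c / ((n + 1).factorial : ℝ))
      refine h2.congr_deriv ?_
      have hnf : (n.factorial : ℝ) ≠ 0 := by positivity
      rw [hfac]; field_simp
    set h : ℝ → ℝ := fun y => f y - p y with hh_def
    have hmono : MonotoneOn h (Set.Icc a b) := by
      refine monotoneOn_of_deriv_nonneg (convex_Icc a b) ?_ ?_ ?_
      · exact (hf.continuous.sub (by fun_prop)).continuousOn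
      · intro y hy
        exact ((hfd y).sub (hp y).differentiableAt).differentiableWithinAt
      · intro y hy
        rw [interior_Icc] at hy
        have hder : HasDerivAt h (deriv f y - c * (y - a) ^ n / (n.factorial : ℝ)) y :=
          (hfd y).hasDerivAt.sub (hp y)
        rw [hder.deriv]
        have := IH' y (Ioo_subset_Icc_self hy)
        linarith
    have hab : a ≤ b := le_trans hx.1 hx.2
    have hha : h a = 0 := by
      have hfa : f a = 0 := by simpa using hz 0 (by omega)
      simp [hh_def, hp_def, hfa]
    have := hmono ⟨le_refl a, hab⟩ hx hx.1
    rw [hha] at this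
    have : p x ≤ f x := by simpa [hh_def, sub_nonneg] using this
    calc c * (x - a) ^ (n + 1) / ((n + 1).factorial : ℝ) = p x := by rw [hp_def]; ring
    _ ≤ f x := this

private lemma russmann_lemB : ∀ (n : ℕ) (f : ℝ → ℝ) (a b c : ℝ), 0 < c → ContDiff ℝ n f →
    (∀ k < n, iteratedDeriv k f b = 0) →
    (∀ x ∈ Set.Icc a b, c ≤ (-1) ^ n * iteratedDeriv n f x) →
    ∀ x ∈ Set.Icc a b, c * (b - x) ^ n / (n.factorial : ℝ) ≤ f x := by
  intro n
  induction n with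
  | zero =>
    intro f a b c hc _ _ hbd x hx
    simpa using hbd x hx
  | succ n IH =>
    intro f a b c hc hf hz hbd x hx
    have hf' : ContDiff ℝ ((n : WithTop ℕ∞) + 1) f := by exact_mod_cast hf
    obtain ⟨hfd, -, hfderiv⟩ := contDiff_succ_iff_deriv.mp hf'
    have hfderiv' : ContDiff ℝ (n : ℕ) (deriv f) := by exact_mod_cast hfderiv
    have IH' : ∀ y ∈ Set.Icc a b, c * (b - y) ^ n / (n.factorial : ℝ) ≤ -deriv f y := by
      refine IH (fun y => -deriv f y) a b c hc hfderiv'.neg (fun k hk => ?_) (fun y hy => ?_)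
      · rw [iteratedDeriv_fun_neg, ← iteratedDeriv_succ']
        simpa using hz (k + 1) (by omega)
      · rw [iteratedDeriv_fun_neg, ← iteratedDeriv_succ']
        have := hbd y hy
        rw [pow_succ] at this
        nlinarith [this]
    set p : ℝ → ℝ := fun y => c / ((n + 1).factorial : ℝ) * (b - y) ^ (n + 1) with hp_def
    have hfac : ((n + 1).factorial : ℝ) = (n + 1) * (n.factorial : ℝ) := by
      exact_mod_cast Nat.factorial_succ n
    have hp : ∀ y : ℝ, HasDerivAt p (-(c * (b - y) ^ n / (n.factorial : ℝ))) y := by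
      intro y
      have h1 : HasDerivAt (fun y : ℝ => (b - y) ^ (n + 1))
          ((n + 1 : ℝ) * (b - y) ^ n * (-1)) y := by
        have h0 : HasDerivAt (fun y : ℝ => b - y) (-1) y := by
          simpa using (hasDerivAt_id y).const_sub b
        simpa using h0.fun_pow (n + 1)
      have h2 := h1.const_mul (c / ((n + 1).factorial : ℝ))
      refine h2.congr_deriv ?_
      have hnf : (n.factorial : ℝ) ≠ 0 := by positivity
      rw [hfac]; field_simp
    set h : ℝ → ℝ := fun y => f y - p y with hh_def
    have hanti : AntitoneOn h (Set.Icc a b) := by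
      refine antitoneOn_of_deriv_nonpos (convex_Icc a b) ?_ ?_ ?_
      · exact (hf.continuous.sub (by fun_prop)).continuousOn
      · intro y hy
        exact ((hfd y).sub (hp y).differentiableAt).differentiableWithinAt
      · intro y hy
        rw [interior_Icc] at hy
        have hder : HasDerivAt h (deriv f y + c * (b - y) ^ n / (n.factorial : ℝ)) y := by
          simpa [sub_neg_eq_add] using (hfd y).hasDerivAt.fun_sub (hp y)
        rw [hder.deriv]
        have := IH' y (Ioo_subset_Icc_self hy)
        linarith
    have hab : a ≤ b := le_trans hx.1 hx.2
    have hhb : h b = 0 := by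
      have hfb : f b = 0 := by simpa using hz 0 (by omega)
      simp [hh_def, hp_def, hfb]
    have := hanti hx ⟨hab, le_refl b⟩ hx.2
    rw [hhb] at this
    have : p x ≤ f x := by simpa [hh_def, sub_nonneg] using this
    calc c * (b - x) ^ (n + 1) / ((n + 1).factorial : ℝ) = p x := by rw [hp_def]; ring
    _ ≤ f x := this

private lemma russmann_lemZ (m₀ n : ℕ) (f : ℝ → ℝ) (z : ℝ) (hf : ContDiff ℝ (m₀ + 1) f)
    (hn : n ≤ m₀) (hz : ∀ k < n, iteratedDeriv k f z = 0) (hnz : iteratedDeriv n f z ≠ 0) :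
    ∃ c > 0, ∃ r > 0, r ≤ 1 ∧ ∀ x : ℝ, |x - z| ≤ r → c * |x - z| ^ n ≤ |f x| := by
  set F := iteratedDeriv n f with hF_def
  have hFc : Continuous F :=
    hf.continuous_iteratedDeriv n (by exact_mod_cast Nat.le_succ_of_le hn)
  have hfn : ContDiff ℝ (n : ℕ) f := hf.of_le (by exact_mod_cast Nat.le_succ_of_le hn)
  set c0 : ℝ := |F z| / 2 with hc0_def
  have hc0 : 0 < c0 := by
    have : 0 < |F z| := abs_pos.mpr hnz
    positivity
  obtain ⟨ε, hε, hcont⟩ := Metric.continuousAt_iff.mp hFc.continuousAt (ε := c0) hc0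
  set r : ℝ := min (ε / 2) 1 with hr_def
  have hr : 0 < r := by positivity
  have hr1 : r ≤ 1 := min_le_right _ _
  have hFlow : ∀ x : ℝ, |x - z| ≤ r → c0 ≤ |F x| := by
    intro x hx
    have hdist : dist x z < ε := by
      rw [Real.dist_eq]
      calc |x - z| ≤ r := hx
        _ ≤ ε / 2 := min_le_left _ _
        _ < ε := by linarith
    have := hcont hdist
    rw [Real.dist_eq] at this
    have h1 : |F z| - |F x| ≤ |F x - F z| := by
      have := abs_sub_abs_le_abs_sub (F z) (F x)
      rwa [abs_sub_comm] at this
    have : |F z| - |F x| < c0 := lt_of_le_of_lt h1 this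
    rw [hc0_def] at this ⊢
    linarith
  have hmemJ : ∀ x ∈ Set.Icc (z - r) (z + r), |x - z| ≤ r := by
    intro x hx
    rw [abs_le]
    constructor <;> [linarith [hx.1]; linarith [hx.2]]
  -- sign dichotomy
  have hsign : (∀ x ∈ Set.Icc (z - r) (z + r), c0 ≤ F x) ∨
      (∀ x ∈ Set.Icc (z - r) (z + r), c0 ≤ -F x) := by
    have hpt : ∀ x ∈ Set.Icc (z - r) (z + r), c0 ≤ F x ∨ F x ≤ -c0 := by
      intro x hx
      rcases le_abs.mp (hFlow x (hmemJ x hx)) with h | h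
      · exact Or.inl h
      · right; linarith
    have hzJ : z ∈ Set.Icc (z - r) (z + r) := by constructor <;> linarith
    have hIVT : ∀ x ∈ Set.Icc (z - r) (z + r), ∀ y ∈ Set.Icc (z - r) (z + r),
        F x ≤ -c0 → c0 ≤ F y → False := by
      intro x hx y hy hxneg hypos
      have hsub : Set.uIcc x y ⊆ Set.Icc (z - r) (z + r) :=
        (Set.ordConnected_Icc).uIcc_subset hx hy
      have h0 : (0 : ℝ) ∈ Set.uIcc (F x) (F y) := by
        rw [Set.mem_uIcc]
        left; constructor <;> linarith
      obtain ⟨w, hw, hFw⟩ := intermediate_value_uIcc (hFc.continuousOn) h0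
      have := hFlow w (hmemJ w (hsub hw))
      rw [hFw] at this
      simp at this
      linarith
    rcases hpt z hzJ with h | h
    · left
      intro x hx
      rcases hpt x hx with h' | h'
      · exact h'
      · exact absurd (hIVT x hx z hzJ h' h) (fun t => t)
    · right
      intro x hx
      rcases hpt x hx with h' | h'
      · exact absurd (hIVT z hzJ x hx h h') (fun t => t)
      · linarith
  refine ⟨c0 / (n.factorial : ℝ), by positivity, r, hr, hr1, ?_⟩
  intro x hx
  have hfx_le : ∀ g : ℝ → ℝ, (∀ y, |g y| = |f y|) →
      c0 * |x - z| ^ n / (n.factorial : ℝ) ≤ g x →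
      c0 / (n.factorial : ℝ) * |x - z| ^ n ≤ |f x| := by
    intro g hg hle
    have : g x ≤ |g x| := le_abs_self _
    rw [hg x] at this
    calc c0 / (n.factorial : ℝ) * |x - z| ^ n = c0 * |x - z| ^ n / (n.factorial : ℝ) := by ring
      _ ≤ g x := hle
      _ ≤ |f x| := this
  have habs : ∀ y : ℝ, |(-f) y| = |f y| := fun y => abs_neg _
  have hzneg : ∀ k < n, iteratedDeriv k (fun y => -f y) z = 0 := by
    intro k hk; rw [iteratedDeriv_fun_neg]; simp [hz k hk]
  rcases le_or_gt z x with hxz | hxz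
  · -- right side: x ∈ Icc z (z + r)
    have hxmem : x ∈ Set.Icc z (z + r) := by
      constructor
      · exact hxz
      · have := (abs_le.mp hx).1
        linarith [(abs_le.mp hx).2]
    have habs_eq : |x - z| = x - z := abs_of_nonneg (by linarith)
    have hsubJ : Set.Icc z (z + r) ⊆ Set.Icc (z - r) (z + r) :=
      Set.Icc_subset_Icc (by linarith) (le_refl _)
    rcases hsign with hpos | hneg
    · have := russmann_lemA n f z (z + r) c0 hc0 hfn hz
        (fun y hy => hpos y (hsubJ hy)) x hxmem
      refine hfx_le f (fun _ => rfl) ?_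
      rw [habs_eq]; exact this
    · have := russmann_lemA n (fun y => -f y) z (z + r) c0 hc0 hfn.neg hzneg
        (fun y hy => by rw [iteratedDeriv_fun_neg]; exact hneg y (hsubJ hy)) x hxmem
      refine hfx_le (fun y => -f y) habs ?_
      rw [habs_eq]; exact this
  · -- left side: x ∈ Icc (z - r) z
    have hxmem : x ∈ Set.Icc (z - r) z := by
      constructor
      · have := (abs_le.mp hx).1
        linarith
      · linarith
    have habs_eq : |x - z| = z - x := by
      rw [abs_sub_comm]; exact abs_of_nonneg (by linarith)
    have hsubJ : Set.Icc (z - r) z ⊆ Set.Icc (z - r) (z + r) :=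
      Set.Icc_subset_Icc (le_refl _) (by linarith)
    -- need: c0 ≤ (-1)^n * iteratedDeriv n g y on Icc (z-r) z for g = f or -f
    have hchoice : (∀ y ∈ Set.Icc (z - r) z, c0 ≤ (-1 : ℝ) ^ n * iteratedDeriv n f y) ∨
        (∀ y ∈ Set.Icc (z - r) z, c0 ≤ (-1 : ℝ) ^ n * iteratedDeriv n (fun t => -f t) y) := by
      rcases Nat.even_or_odd n with hpar | hpar
      · rw [hpar.neg_one_pow]
        rcases hsign with hpos | hneg
        · left; intro y hy; simpa using hpos y (hsubJ hy)
        · right; intro y hy; rw [iteratedDeriv_fun_neg]; simpa using hneg y (hsubJ hy)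
      · rw [hpar.neg_one_pow]
        rcases hsign with hpos | hneg
        · right; intro y hy; rw [iteratedDeriv_fun_neg]; simpa using hpos y (hsubJ hy)
        · left; intro y hy; simpa using hneg y (hsubJ hy)
    rcases hchoice with hc | hc
    · have := russmann_lemB n f (z - r) z c0 hc0 hfn hz hc x hxmem
      refine hfx_le f (fun _ => rfl) ?_
      rw [habs_eq]; exact this
    · have := russmann_lemB n (fun y => -f y) (z - r) z c0 hc0 hfn.neg hzneg hc x hxmem
      refine hfx_le (fun y => -f y) habs ?_
      rw [habs_eq]; exact this

private lemma russmann_exp_le_one (m₀ : ℕ) : (1 : ℝ) / m₀ ≤ 1 := by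
  rcases Nat.eq_zero_or_pos m₀ with h | h
  · simp [h]
  · rw [div_le_one (by exact_mod_cast h)]
    exact_mod_cast h

private lemma russmann_lemL (m₀ : ℕ) (ρ : ℝ) (f : ℝ → ℝ) (z : ℝ) (hρ : 0 < ρ)
    (hf : ContDiff ℝ (m₀ + 1) f) (htz : ∃ n ≤ m₀, ρ ≤ |iteratedDeriv n f z|) :
    ∃ r > 0, ∃ K > 0, ∀ δ : ℝ, 0 < δ →
      MeasureTheory.volume {x ∈ Metric.ball z r | |f x| < δ}
        ≤ ENNReal.ofReal (K * δ ^ ((1 : ℝ) / m₀)) := by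
  by_cases hfz : f z = 0
  · -- zero case
    have hex : ∃ k, iteratedDeriv k f z ≠ 0 := by
      obtain ⟨n₀, hn₀, hρn⟩ := htz
      exact ⟨n₀, fun h => by rw [h] at hρn; simp at hρn; linarith⟩
    set n := Nat.find hex with hn_def
    have hnz : iteratedDeriv n f z ≠ 0 := Nat.find_spec hex
    have hzeros : ∀ k < n, iteratedDeriv k f z = 0 := fun k hk =>
      of_not_not (Nat.find_min hex hk)
    have hnm : n ≤ m₀ := by
      obtain ⟨n₀, hn₀, hρn⟩ := htz
      exact le_trans (Nat.find_min' hex (fun h => by rw [h] at hρn; simp at hρn; linarith)) hn₀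
    have hn1 : 1 ≤ n := by
      by_contra h
      push_neg at h
      interval_cases n
      · exact hnz (by simpa using hfz)
    have hm1 : 1 ≤ m₀ := le_trans hn1 hnm
    have hm0 : (m₀ : ℝ) ≠ 0 := by exact_mod_cast Nat.one_le_iff_ne_zero.mp hm1
    obtain ⟨c, hc, r, hr, hr1, hbound⟩ := russmann_lemZ m₀ n f z hf hnm hzeros hnz
    refine ⟨r, hr, 2 * (1 / c) ^ ((1 : ℝ) / m₀), by positivity, ?_⟩
    intro δ hδ
    have hsub : {x ∈ Metric.ball z r | |f x| < δ} ⊆ Metric.ball z ((δ / c) ^ ((1 : ℝ) / m₀)) := by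
      rintro x ⟨hxb, hxδ⟩
      rw [Metric.mem_ball, Real.dist_eq] at hxb ⊢
      have hxr : |x - z| ≤ r := hxb.le
      have h1 : c * |x - z| ^ n ≤ |f x| := hbound x hxr
      have h2 : |x - z| ^ m₀ ≤ |x - z| ^ n :=
        pow_le_pow_of_le_one (abs_nonneg _) (le_trans hxr hr1) hnm
      have h3 : c * |x - z| ^ m₀ < δ := by nlinarith
      have h4 : |x - z| ^ m₀ < δ / c := by
        rw [lt_div_iff₀ hc]; linarith
      have h5 : (|x - z| ^ (m₀ : ℕ)) ^ ((1 : ℝ) / m₀) < (δ / c) ^ ((1 : ℝ) / m₀) :=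
        Real.rpow_lt_rpow (by positivity) h4 (by positivity)
      calc |x - z| = (|x - z| ^ (m₀ : ℕ)) ^ ((1 : ℝ) / m₀) := by
            rw [← Real.rpow_natCast |x - z| m₀, ← Real.rpow_mul (abs_nonneg _)]
            rw [mul_one_div, div_self hm0, Real.rpow_one]
        _ < (δ / c) ^ ((1 : ℝ) / m₀) := h5
    calc MeasureTheory.volume {x ∈ Metric.ball z r | |f x| < δ}
        ≤ MeasureTheory.volume (Metric.ball z ((δ / c) ^ ((1 : ℝ) / m₀))) :=
          measure_mono hsub
      _ = ENNReal.ofReal (2 * (δ / c) ^ ((1 : ℝ) / m₀)) := Real.volume_ball _ _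
      _ ≤ ENNReal.ofReal (2 * (1 / c) ^ ((1 : ℝ) / m₀) * δ ^ ((1 : ℝ) / m₀)) := by
          apply ENNReal.ofReal_le_ofReal
          rw [div_eq_mul_one_div δ c, Real.mul_rpow hδ.le (by positivity)]
          ring_nf
          exact le_refl _
  · -- nonzero case
    set c0 : ℝ := |f z| / 2 with hc0_def
    have hc0 : 0 < c0 := by
      have : 0 < |f z| := abs_pos.mpr hfz
      positivity
    obtain ⟨ε, hε, hcont⟩ := Metric.continuousAt_iff.mp hf.continuous.continuousAt (ε := c0) hc0
    set r : ℝ := ε / 2 with hr_def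
    have hr : 0 < r := by positivity
    have hflow : ∀ x ∈ Metric.ball z r, c0 ≤ |f x| := by
      intro x hx
      rw [Metric.mem_ball] at hx
      have : dist (f x) (f z) < c0 := hcont (by rw [hr_def] at hx; linarith [hx])
      rw [Real.dist_eq] at this
      have h1 : |f z| - |f x| ≤ |f x - f z| := by
        have := abs_sub_abs_le_abs_sub (f z) (f x)
        rwa [abs_sub_comm] at this
      rw [hc0_def]
      linarith [lt_of_le_of_lt h1 this]
    set e : ℝ := min c0 1 with he_def
    have he : 0 < e := lt_min hc0 one_pos
    have he1 : e ≤ 1 := min_le_right _ _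
    refine ⟨r, hr, 2 * r / e, by positivity, ?_⟩
    intro δ hδ
    by_cases hδc : δ ≤ c0
    · have hempty : {x ∈ Metric.ball z r | |f x| < δ} = ∅ := by
        ext x
        simp only [Set.mem_setOf_eq, Set.mem_empty_iff_false, iff_false, not_and]
        intro hxb
        push_neg
        exact le_trans hδc (hflow x hxb)
      rw [hempty]
      simp
    · push_neg at hδc
      have hδe : e ≤ δ := le_trans (min_le_left _ _) hδc.le
      have h1 : e ≤ δ ^ ((1 : ℝ) / m₀) := by
        rcases le_or_gt 1 δ with h | h
        · exact le_trans he1 (Real.one_le_rpow h (by positivity))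
        · calc e ≤ δ := hδe
            _ = δ ^ (1 : ℝ) := (Real.rpow_one δ).symm
            _ ≤ δ ^ ((1 : ℝ) / m₀) :=
              Real.rpow_le_rpow_of_exponent_ge hδ h.le (russmann_exp_le_one m₀)
      calc MeasureTheory.volume {x ∈ Metric.ball z r | |f x| < δ}
          ≤ MeasureTheory.volume (Metric.ball z r) := measure_mono (Set.sep_subset _ _)
        _ = ENNReal.ofReal (2 * r) := Real.volume_ball _ _
        _ ≤ ENNReal.ofReal (2 * r / e * δ ^ ((1 : ℝ) / m₀)) := by
            apply ENNReal.ofReal_le_ofReal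
            rw [div_mul_eq_mul_div, le_div_iff₀ he]
            nlinarith

/-- Rüssmann's lemma: if `f` is smooth enough and uniformly transversal on `[γ₁, γ₂]`
(`max_{0 ≤ n ≤ m₀} |∂_γⁿ f(γ)| ≥ ρ` for all `γ`), then for every `δ > 0` the sublevel set
`{γ ∈ [γ₁, γ₂] : |f γ| < δ}` has measure at most `C δ^{1/m₀}`, for a constant `C` depending on
`m₀`, `ρ` and `f`. -/
theorem russmann_sublevel_estimate (m₀ : ℕ) (γ₁ γ₂ ρ : ℝ) (f : ℝ → ℝ)
    (hρ : 0 < ρ)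
    (hf : ContDiff ℝ (m₀ + 1) f)
    (htrans : ∀ γ ∈ Set.Icc γ₁ γ₂, ∃ n ≤ m₀, ρ ≤ |iteratedDeriv n f γ|) :
    ∃ C : ℝ, 0 < C ∧ ∀ δ : ℝ, 0 < δ →
      MeasureTheory.volume {γ ∈ Set.Icc γ₁ γ₂ | |f γ| < δ}
        ≤ ENNReal.ofReal (C * δ ^ ((1 : ℝ) / m₀)) := by
  have key : ∀ z ∈ Set.Icc γ₁ γ₂, ∃ r > 0, ∃ K > 0, ∀ δ : ℝ, 0 < δ →
      MeasureTheory.volume {x ∈ Metric.ball z r | |f x| < δ}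
        ≤ ENNReal.ofReal (K * δ ^ ((1 : ℝ) / m₀)) :=
    fun z hz => russmann_lemL m₀ ρ f z hρ hf (htrans z hz)
  choose! r hr K hK hball using key
  obtain ⟨b', hb'sub, hb'fin, hcover⟩ :=
    isCompact_Icc.elim_finite_subcover_image (b := Set.Icc γ₁ γ₂)
      (c := fun z => Metric.ball z (r z)) (fun z _ => Metric.isOpen_ball)
      (fun x hx => Set.mem_biUnion hx (Metric.mem_ball_self (hr x hx)))
  set t := hb'fin.toFinset with ht_def
  have htmem : ∀ z ∈ t, z ∈ Set.Icc γ₁ γ₂ := fun z hz => hb'sub (hb'fin.mem_toFinset.mp hz)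
  refine ⟨(∑ z ∈ t, K z) + 1, ?_, ?_⟩
  · have : 0 ≤ ∑ z ∈ t, K z := Finset.sum_nonneg fun z hz => (hK z (htmem z hz)).le
    linarith
  intro δ hδ
  have hδe : 0 ≤ δ ^ ((1 : ℝ) / m₀) := Real.rpow_nonneg hδ.le _
  have hsub : {γ ∈ Set.Icc γ₁ γ₂ | |f γ| < δ} ⊆
      ⋃ z ∈ t, {x ∈ Metric.ball z (r z) | |f x| < δ} := by
    rintro γ ⟨hγI, hγδ⟩
    have := hcover hγI
    rw [Set.mem_iUnion₂] at this
    obtain ⟨z, hzb', hzball⟩ := this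
    exact Set.mem_iUnion₂.mpr ⟨z, hb'fin.mem_toFinset.mpr hzb', hzball, hγδ⟩
  calc MeasureTheory.volume {γ ∈ Set.Icc γ₁ γ₂ | |f γ| < δ}
      ≤ MeasureTheory.volume (⋃ z ∈ t, {x ∈ Metric.ball z (r z) | |f x| < δ}) :=
        measure_mono hsub
    _ ≤ ∑ z ∈ t, MeasureTheory.volume {x ∈ Metric.ball z (r z) | |f x| < δ} :=
        MeasureTheory.measure_biUnion_finset_le t _
    _ ≤ ∑ z ∈ t, ENNReal.ofReal (K z * δ ^ ((1 : ℝ) / m₀)) :=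
        Finset.sum_le_sum fun z hz => hball z (htmem z hz) δ hδ
    _ = ENNReal.ofReal (∑ z ∈ t, K z * δ ^ ((1 : ℝ) / m₀)) :=
        (ENNReal.ofReal_sum_of_nonneg fun z hz =>
          mul_nonneg (hK z (htmem z hz)).le hδe).symm
    _ ≤ ENNReal.ofReal (((∑ z ∈ t, K z) + 1) * δ ^ ((1 : ℝ) / m₀)) := by
        apply ENNReal.ofReal_le_ofReal
        rw [← Finset.sum_mul]
        have : 0 ≤ ∑ z ∈ t, K z := Finset.sum_nonneg fun z hz => (hK z (htmem z hz)).le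
        nlinarith
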